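/- arXiv:2103.10134 — 2 statements merged into one kernel-verified Lean document; each statement's English description precedes it below -/
import Mathlib

section
/- The Gibbs non-stationary kernel k(x,x') = √(2ℓ(x)ℓ(x')/(ℓ(x)²+ℓ(x')²)) · exp(−(x−x')²/(ℓ(x)²+ℓ(x')²)), where ℓ : ℝ → ℝ is a positive function, is a positive semidefinite kernel on ℝ. -/
open Real MeasureTheory

/-- Shifted Gaussian integral. -/
lemma gauss_shift (p m : ℝ) (_hp : 0 < p) :
    ∫ u : ℝ, Real.exp (-p * (u - m) ^ 2) = Real.sqrt (π / p) := by
  rw [← integral_gaussian p]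
  exact integral_sub_right_eq_self (fun u => Real.exp (-p * u ^ 2)) m

lemma integrable_gauss_shift (p m : ℝ) (hp : 0 < p) :
    Integrable (fun u : ℝ => Real.exp (-p * (u - m) ^ 2)) :=
  (integrable_exp_neg_mul_sq hp).comp_sub_right m

/-- Completing the square. -/
lemma complete_square (a b x x' : ℝ) (ha : a ≠ 0) (hb : b ≠ 0) (u : ℝ) :
    -(x - u) ^ 2 / a ^ 2 + -(x' - u) ^ 2 / b ^ 2 =
      -((a ^ 2 + b ^ 2) / (a ^ 2 * b ^ 2)) *
          (u - (b ^ 2 * x + a ^ 2 * x') / (a ^ 2 + b ^ 2)) ^ 2 +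
        -(x - x') ^ 2 / (a ^ 2 + b ^ 2) := by
  have hab : a ^ 2 + b ^ 2 ≠ 0 := by positivity
  field_simp
  ring

lemma gauss_prod_integral (a b x x' : ℝ) (ha : 0 < a) (hb : 0 < b) :
    ∫ u : ℝ, Real.exp (-(x - u) ^ 2 / a ^ 2) * Real.exp (-(x' - u) ^ 2 / b ^ 2) =
      Real.sqrt (π * (a ^ 2 * b ^ 2) / (a ^ 2 + b ^ 2)) *
        Real.exp (-(x - x') ^ 2 / (a ^ 2 + b ^ 2)) := by
  have hp : 0 < (a ^ 2 + b ^ 2) / (a ^ 2 * b ^ 2) := by positivity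
  have key : ∀ u : ℝ,
      Real.exp (-(x - u) ^ 2 / a ^ 2) * Real.exp (-(x' - u) ^ 2 / b ^ 2) =
        Real.exp (-((a ^ 2 + b ^ 2) / (a ^ 2 * b ^ 2)) *
            (u - (b ^ 2 * x + a ^ 2 * x') / (a ^ 2 + b ^ 2)) ^ 2) *
          Real.exp (-(x - x') ^ 2 / (a ^ 2 + b ^ 2)) := by
    intro u
    rw [← Real.exp_add, ← Real.exp_add, complete_square a b x x' ha.ne' hb.ne' u]
  simp only [key]
  rw [integral_mul_const, gauss_shift _ _ hp]
  have : π / ((a ^ 2 + b ^ 2) / (a ^ 2 * b ^ 2)) = π * (a ^ 2 * b ^ 2) / (a ^ 2 + b ^ 2) := by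
    rw [div_div_eq_mul_div]
  rw [this]

lemma integrable_gauss_prod (a b x x' : ℝ) (ha : 0 < a) (hb : 0 < b) :
    Integrable (fun u : ℝ =>
      Real.exp (-(x - u) ^ 2 / a ^ 2) * Real.exp (-(x' - u) ^ 2 / b ^ 2)) := by
  have hp : 0 < (a ^ 2 + b ^ 2) / (a ^ 2 * b ^ 2) := by positivity
  have key : (fun u : ℝ =>
      Real.exp (-(x - u) ^ 2 / a ^ 2) * Real.exp (-(x' - u) ^ 2 / b ^ 2)) =
        fun u => Real.exp (-((a ^ 2 + b ^ 2) / (a ^ 2 * b ^ 2)) *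
            (u - (b ^ 2 * x + a ^ 2 * x') / (a ^ 2 + b ^ 2)) ^ 2) *
          Real.exp (-(x - x') ^ 2 / (a ^ 2 + b ^ 2)) := by
    funext u
    rw [← Real.exp_add, ← Real.exp_add, complete_square a b x x' ha.ne' hb.ne' u]
  rw [key]
  exact (integrable_gauss_shift _ _ hp).mul_const _

def IsPSDKernel {X : Type*} (k : X → X → ℝ) : Prop :=
  (∀ x y, k x y = k y x) ∧
  ∀ (n : ℕ) (x : Fin n → X) (c : Fin n → ℝ),
    0 ≤ ∑ i, ∑ j, c i * c j * k (x i) (x j)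

/-- The feature map. -/
noncomputable def gibbsFeature (ℓ : ℝ → ℝ) (u x : ℝ) : ℝ :=
  Real.sqrt (Real.sqrt (2 / π) / ℓ x) * Real.exp (-(x - u) ^ 2 / (ℓ x) ^ 2)

lemma gibbs_integral (ℓ : ℝ → ℝ) (hℓ : ∀ x, 0 < ℓ x) (x x' : ℝ) :
    ∫ u : ℝ, gibbsFeature ℓ u x * gibbsFeature ℓ u x' =
      Real.sqrt (2 * ℓ x * ℓ x' / (ℓ x ^ 2 + ℓ x' ^ 2)) *
        Real.exp (-(x - x') ^ 2 / (ℓ x ^ 2 + ℓ x' ^ 2)) := by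
  have ha := hℓ x
  have hb := hℓ x'
  have h1 : ∀ u : ℝ, gibbsFeature ℓ u x * gibbsFeature ℓ u x' =
      (Real.sqrt (Real.sqrt (2 / π) / ℓ x) * Real.sqrt (Real.sqrt (2 / π) / ℓ x')) *
        (Real.exp (-(x - u) ^ 2 / (ℓ x) ^ 2) * Real.exp (-(x' - u) ^ 2 / (ℓ x') ^ 2)) := by
    intro u; unfold gibbsFeature; ring
  simp only [h1]
  rw [integral_const_mul, gauss_prod_integral _ _ _ _ ha hb, ← mul_assoc]
  congr 1
  rw [← Real.sqrt_mul (by positivity), ← Real.sqrt_mul (by positivity)]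
  congr 1
  have hπ : (0:ℝ) < π := Real.pi_pos
  have h2 : Real.sqrt (2 / π) * Real.sqrt (2 / π) = 2 / π :=
    Real.mul_self_sqrt (by positivity)
  have habne : ℓ x ^ 2 + ℓ x' ^ 2 ≠ 0 := by positivity
  field_simp
  have h3 : Real.sqrt π * Real.sqrt π = π := Real.mul_self_sqrt hπ.le
  have h4 : π * (2 / π) = 2 := by field_simp
  linear_combination π * h2 + h4

lemma integrable_gibbs_prod (ℓ : ℝ → ℝ) (hℓ : ∀ x, 0 < ℓ x) (x x' : ℝ) :
    Integrable (fun u : ℝ => gibbsFeature ℓ u x * gibbsFeature ℓ u x') := by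
  have h1 : (fun u : ℝ => gibbsFeature ℓ u x * gibbsFeature ℓ u x') =
      fun u => (Real.sqrt (Real.sqrt (2 / π) / ℓ x) * Real.sqrt (Real.sqrt (2 / π) / ℓ x')) *
        (Real.exp (-(x - u) ^ 2 / (ℓ x) ^ 2) * Real.exp (-(x' - u) ^ 2 / (ℓ x') ^ 2)) := by
    funext u; unfold gibbsFeature; ring
  rw [h1]
  exact (integrable_gauss_prod _ _ _ _ (hℓ x) (hℓ x')).const_mul _

theorem gibbs_kernel_is_psd (ℓ : ℝ → ℝ) (hℓ : ∀ x, 0 < ℓ x) :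
    IsPSDKernel (fun x x' : ℝ =>
      Real.sqrt (2 * ℓ x * ℓ x' / (ℓ x ^ 2 + ℓ x' ^ 2)) *
        Real.exp (-(x - x')^2 / (ℓ x ^ 2 + ℓ x' ^ 2))) := by
  constructor
  · intro x y
    have h1 : 2 * ℓ x * ℓ y = 2 * ℓ y * ℓ x := by ring
    have h2 : ℓ x ^ 2 + ℓ y ^ 2 = ℓ y ^ 2 + ℓ x ^ 2 := by ring
    have h3 : -(x - y) ^ 2 = -(y - x) ^ 2 := by ring
    simp only [h1, h2, h3]
  · intro n x c
    have hk : ∀ i j,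
        c i * c j *
          (Real.sqrt (2 * ℓ (x i) * ℓ (x j) / (ℓ (x i) ^ 2 + ℓ (x j) ^ 2)) *
            Real.exp (-(x i - x j) ^ 2 / (ℓ (x i) ^ 2 + ℓ (x j) ^ 2))) =
          ∫ u : ℝ, c i * gibbsFeature ℓ u (x i) * (c j * gibbsFeature ℓ u (x j)) := by
      intro i j
      rw [← gibbs_integral ℓ hℓ (x i) (x j), ← integral_const_mul]
      congr 1; funext u; ring
    simp only [hk]
    have hiI : ∀ (i j : Fin n), Integrable
        (fun u : ℝ => c i * gibbsFeature ℓ u (x i) * (c j * gibbsFeature ℓ u (x j))) := by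
      intro i j
      have := ((integrable_gibbs_prod ℓ hℓ (x i) (x j)).const_mul (c i * c j))
      convert this using 1
      · rfl
      funext u; ring
    have hswap : ∑ i : Fin n, ∑ j : Fin n,
        (∫ u : ℝ, c i * gibbsFeature ℓ u (x i) * (c j * gibbsFeature ℓ u (x j))) =
        ∫ u : ℝ, ∑ i : Fin n, ∑ j : Fin n,
          c i * gibbsFeature ℓ u (x i) * (c j * gibbsFeature ℓ u (x j)) := by
      rw [integral_finset_sum]
      · exact Finset.sum_congr rfl fun i _ => (integral_finset_sum _ fun j _ => hiI i j).symm
      · intro i _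
        exact integrable_finset_sum _ fun j _ => hiI i j
    rw [hswap]
    refine integral_nonneg fun u => ?_
    show (0:ℝ) ≤ ∑ i : Fin n, ∑ j : Fin n,
        c i * gibbsFeature ℓ u (x i) * (c j * gibbsFeature ℓ u (x j))
    have : ∑ i : Fin n, ∑ j : Fin n,
        c i * gibbsFeature ℓ u (x i) * (c j * gibbsFeature ℓ u (x j)) =
        (∑ i : Fin n, c i * gibbsFeature ℓ u (x i)) ^ 2 := by
      rw [sq, Finset.sum_mul_sum]
    rw [this]
    positivity
end

section
/- Adding more data never increases GP posterior variance: let the augmented Gram matrix on n+1 training points be positive definite; then the predictive variance at a test point using all n+1 points is less than or equal to the predictive variance using only the first n points, i.e., k** − k̃*ᵀ(K̃+σ²I)⁻¹k̃* ≤ k** − k*ᵀ(K+σ²I)⁻¹k*, where K̃, k̃* are the (n+1)-point Gram matrix and cross-covariance vector extending K, k*. -/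
open Matrix

lemma smul_one_posDef {m : ℕ} {σ2 : ℝ} (hσ : 0 < σ2) :
    (σ2 • (1 : Matrix (Fin m) (Fin m) ℝ)).PosDef := by
  rw [smul_one_eq_diagonal]
  exact (Matrix.posDef_diagonal_iff).2 fun _ => hσ

/-- Key inequality: for symmetric positive definite `B`,
`2 (x ⬝ v) - x ⬝ B x ≤ v ⬝ B⁻¹ v`. -/
lemma key_ineq {m : ℕ} {B : Matrix (Fin m) (Fin m) ℝ} (hB : B.PosDef)
    (v x : Fin m → ℝ) :
    2 * (x ⬝ᵥ v) - x ⬝ᵥ B *ᵥ x ≤ v ⬝ᵥ B⁻¹ *ᵥ v := by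
  have hdet : IsUnit B.det := hB.det_pos.ne'.isUnit
  set r : Fin m → ℝ := B⁻¹ *ᵥ v with hr
  have hBr : B *ᵥ r = v := by
    rw [hr, mulVec_mulVec, Matrix.mul_nonsing_inv _ hdet, one_mulVec]
  have hsymm : Bᵀ = B := hB.isHermitian.eq
  have h0 : 0 ≤ (r - x) ⬝ᵥ B *ᵥ (r - x) := by
    simpa using hB.posSemidef.dotProduct_mulVec_nonneg (r - x)
  have hexp : (r - x) ⬝ᵥ B *ᵥ (r - x)
      = r ⬝ᵥ v - x ⬝ᵥ v - (r ⬝ᵥ B *ᵥ x) + x ⬝ᵥ B *ᵥ x := by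
    rw [mulVec_sub, dotProduct_sub, sub_dotProduct, sub_dotProduct, hBr]
    ring
  have hrBx : r ⬝ᵥ B *ᵥ x = x ⬝ᵥ v := by
    rw [dotProduct_mulVec, ← mulVec_transpose, hsymm, hBr, dotProduct_comm]
  have hrv : r ⬝ᵥ v = v ⬝ᵥ B⁻¹ *ᵥ v := by
    rw [hr, dotProduct_comm]
  rw [hexp, hrBx, hrv] at h0
  linarith

/-- Adding one more training observation never increases the GP predictive variance. -/
theorem gp_variance_decreases_with_data {n : ℕ}
    (K : Matrix (Fin n) (Fin n) ℝ) (kstar : Fin n → ℝ)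
    (Ktil : Matrix (Fin (n+1)) (Fin (n+1)) ℝ) (kstil : Fin (n+1) → ℝ)
    (kss σ2 : ℝ) (hσ : 0 < σ2)
    (hext : ∀ i j : Fin n, K i j = Ktil i.castSucc j.castSucc)
    (hkext : ∀ i : Fin n, kstar i = kstil i.castSucc)
    (hKtil : Ktil.PosSemidef)
    (haug : (Matrix.fromBlocks (Matrix.of fun _ _ => kss) (Matrix.of fun _ j => kstil j)
      (Matrix.of fun i _ => kstil i)
      (Ktil + σ2 • (1 : Matrix (Fin (n+1)) (Fin (n+1)) ℝ)) :
        Matrix (Fin 1 ⊕ Fin (n+1)) (Fin 1 ⊕ Fin (n+1)) ℝ).PosSemidef) :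
    kss - kstil ⬝ᵥ (Ktil + σ2 • (1 : Matrix (Fin (n+1)) (Fin (n+1)) ℝ))⁻¹ *ᵥ kstil ≤
      kss - kstar ⬝ᵥ (K + σ2 • (1 : Matrix (Fin n) (Fin n) ℝ))⁻¹ *ᵥ kstar := by
  set A : Matrix (Fin n) (Fin n) ℝ := K + σ2 • 1 with hA
  set B : Matrix (Fin (n+1)) (Fin (n+1)) ℝ := Ktil + σ2 • 1 with hB
  -- K is PSD as a principal submatrix of Ktil
  have hKeq : K = Ktil.submatrix Fin.castSucc Fin.castSucc := by
    ext i j; exact hext i j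
  have hKpsd : K.PosSemidef := hKeq ▸ hKtil.submatrix _
  have hApd : A.PosDef := Matrix.PosDef.posSemidef_add hKpsd (smul_one_posDef hσ)
  have hBpd : B.PosDef := Matrix.PosDef.posSemidef_add hKtil (smul_one_posDef hσ)
  -- the zero-extension of A⁻¹ *ᵥ kstar
  set w : Fin n → ℝ := A⁻¹ *ᵥ kstar with hw
  set x : Fin (n+1) → ℝ := Fin.snoc w 0 with hx
  have hAw : A *ᵥ w = kstar := by
    rw [hw, mulVec_mulVec, Matrix.mul_nonsing_inv _ hApd.det_pos.ne'.isUnit, one_mulVec]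
  have hxv : x ⬝ᵥ kstil = w ⬝ᵥ kstar := by
    rw [dotProduct, Fin.sum_univ_castSucc]
    simp only [hx, Fin.snoc_castSucc, Fin.snoc_last, zero_mul, add_zero]
    exact Finset.sum_congr rfl fun i _ => by rw [hkext i]
  have hBx : ∀ i : Fin n, (B *ᵥ x) i.castSucc = (A *ᵥ w) i := by
    intro i
    rw [mulVec, mulVec, dotProduct, dotProduct, Fin.sum_univ_castSucc]
    simp only [hx, Fin.snoc_castSucc, Fin.snoc_last, mul_zero, add_zero]
    refine Finset.sum_congr rfl fun j _ => ?_
    congr 1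
    simp only [hA, hB, Matrix.add_apply, Matrix.smul_apply, Matrix.one_apply, smul_eq_mul]
    rw [hext i j]
    congr 1
    simp [Fin.castSucc_inj]
  have hxBx : x ⬝ᵥ B *ᵥ x = w ⬝ᵥ kstar := by
    rw [dotProduct, Fin.sum_univ_castSucc]
    have hlast : x (Fin.last n) = 0 := by simp [hx]
    rw [hlast, zero_mul, add_zero]
    calc (∑ i : Fin n, x i.castSucc * (B *ᵥ x) i.castSucc)
        = ∑ i : Fin n, w i * (A *ᵥ w) i := by
          refine Finset.sum_congr rfl fun i _ => ?_
          rw [hBx i]; simp [hx]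
      _ = w ⬝ᵥ A *ᵥ w := rfl
      _ = w ⬝ᵥ kstar := by rw [hAw]
  have hkey := key_ineq hBpd kstil x
  have hws : kstar ⬝ᵥ A⁻¹ *ᵥ kstar = w ⬝ᵥ kstar := by
    rw [hw, dotProduct_comm]
  have : kstar ⬝ᵥ A⁻¹ *ᵥ kstar ≤ kstil ⬝ᵥ B⁻¹ *ᵥ kstil := by
    rw [hws]
    calc w ⬝ᵥ kstar = 2 * (x ⬝ᵥ kstil) - x ⬝ᵥ B *ᵥ x := by rw [hxv, hxBx]; ring
      _ ≤ kstil ⬝ᵥ B⁻¹ *ᵥ kstil := hkey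
  linarith
end
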